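/- Let W be a finite Weyl group acting on the real span of the simple roots α_1, …, α_l, with symmetrized Cartan matrix b_{ij} = (α_i, α_j), and let s_π = s_{π(1)} ⋯ s_{π(l)} be a Coxeter element for a permutation π ∈ S_l. Then 1 − s_π is invertible, and the matrix elements of the Cayley transform satisfy ((1+s_π)/(1−s_π) α_i, α_j) = ε^π_{ij} b_{ij}, where ε^π_{ij} = −1 if π⁻¹(i) < π⁻¹(j), 0 if i = j, and +1 if π⁻¹(i) > π⁻¹(j). -/

import Mathlib

open scoped RealInnerProductSpace

/-- Let `α_1, …, α_l` be simple roots forming a basis of a real inner product space, with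
symmetrized Cartan matrix `b_{ij} = (α_i, α_j)`, `s_i` the corresponding reflections and
`c = s_{π(1)} ⋯ s_{π(l)}` the Coxeter element attached to a permutation `π ∈ S_l`.  Then
`1 − c` is invertible, and the matrix elements of the Cayley transform satisfy
`((1+c)/(1−c) α_i, α_j) = ε^π_{ij} b_{ij}`, where `ε^π_{ij} = −1` if `π⁻¹(i) < π⁻¹(j)`,
`0` if `i = j`, and `+1` if `π⁻¹(i) > π⁻¹(j)`. -/
theorem coxeter_cayley_transform
    {V : Type*} [NormedAddCommGroup V] [InnerProductSpace ℝ V]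
    {l : ℕ} (hl : 0 < l)
    (α : Fin l → V) (hind : LinearIndependent ℝ α)
    (hspan : Submodule.span ℝ (Set.range α) = ⊤)
    (π : Equiv.Perm (Fin l)) :
    -- the simple reflections
    let s : Fin l → V → V := fun i x =>
      x - ((2 * ⟪x, α i⟫ / ⟪α i, α i⟫ : ℝ) • α i)
    -- the Coxeter element s_{π(1)} ∘ ⋯ ∘ s_{π(l)}
    let c : V → V := (List.ofFn fun i => s (π i)).foldr (· ∘ ·) id
    let ε : Fin l → Fin l → ℝ := fun i j =>
      if i = j then 0 else if π.symm i < π.symm j then -1 else 1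
    Function.Bijective (fun x => x - c x) ∧
      ∀ i j : Fin l, ∀ x : V, x - c x = α i →
        ⟪x + c x, α j⟫ = ε i j * ⟪α i, α j⟫ := by
  intro s c ε
  have hs : ∀ (i : Fin l) (x : V),
      s i x = x - ((2 * ⟪x, α i⟫ / ⟪α i, α i⟫ : ℝ) • α i) := fun _ _ => rfl
  have hc : c = (List.ofFn fun i => s (π i)).foldr (· ∘ ·) id := rfl
  have hα : ∀ i, α i ≠ 0 := fun i => hind.ne_zero i
  have hnn : ∀ i, ⟪α i, α i⟫ ≠ 0 := fun i => by
    exact (inner_self_ne_zero (𝕜 := ℝ)).mpr (hα i)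
  set L : List (V → V) := List.ofFn (fun i => s (π i)) with hL
  have hLlen : L.length = l := by simp [hL]
  set z : V → ℕ → V := fun x k => ((L.drop k).foldr (· ∘ ·) id) x with hzdef
  have hz_top : ∀ x, z x l = x := by
    intro x
    simp [hzdef, ← hLlen, List.drop_length]
  have hz_step : ∀ x k (hk : k < l), z x k = s (π ⟨k, hk⟩) (z x (k + 1)) := by
    intro x k hk
    have h1 : L.drop k = s (π ⟨k, hk⟩) :: L.drop (k + 1) := by
      rw [List.drop_eq_getElem_cons (by omega : k < L.length)]
      congr 1
      simp [hL, List.getElem_ofFn]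
    simp only [hzdef, h1, List.foldr_cons, Function.comp_apply]
  have hcz : ∀ x, c x = z x 0 := by
    intro x
    simp [hzdef, hc, hL]
  -- the coefficients
  set t : V → Fin l → ℝ :=
    fun x m => 2 * ⟪z x ((m : ℕ) + 1), α (π m)⟫ / ⟪α (π m), α (π m)⟫ with htdef
  -- splitting sums
  have hsplit : ∀ (X : Fin l → V) (k : ℕ) (hk : k < l),
      (∑ m : Fin l, if k ≤ (m : ℕ) then X m else 0)
        = X ⟨k, hk⟩ + ∑ m : Fin l, if k + 1 ≤ (m : ℕ) then X m else 0 := by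
    intro X k hk
    have key : ∀ m : Fin l, (if k ≤ (m : ℕ) then X m else 0)
        = (if m = ⟨k, hk⟩ then X m else 0) + (if k + 1 ≤ (m : ℕ) then X m else 0) := by
      intro m
      rcases lt_trichotomy (m : ℕ) k with h | h | h
      · rw [if_neg (by omega), if_neg (by simp [Fin.ext_iff]; omega), if_neg (by omega)]
        simp
      · rw [if_pos (by omega), if_pos (by simp [Fin.ext_iff, h]), if_neg (by omega)]
        simp
      · rw [if_pos (by omega), if_neg (by simp [Fin.ext_iff]; omega), if_pos (by omega)]
        simp
    rw [Finset.sum_congr rfl (fun m _ => key m), Finset.sum_add_distrib]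
    congr 1
    simp
  -- the main formula for the partial products
  have hsumAux : ∀ (d : ℕ) (x : V) (k : ℕ), k + d = l →
      z x k = x - ∑ m : Fin l, if k ≤ (m : ℕ) then t x m • α (π m) else 0 := by
    intro d
    induction d with
    | zero =>
      intro x k hk
      have : k = l := by omega
      subst this
      rw [hz_top]
      rw [Finset.sum_eq_zero (fun m _ => by rw [if_neg (by omega)])]
      simp
    | succ d ih =>
      intro x k hk
      have hkl : k < l := by omega
      have ht : (2 * ⟪z x (k + 1), α (π ⟨k, hkl⟩)⟫ / ⟪α (π ⟨k, hkl⟩), α (π ⟨k, hkl⟩)⟫)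
          = t x ⟨k, hkl⟩ := by rw [htdef]
      rw [hz_step x k hkl, hs, ht, ih x (k + 1) (by omega),
        hsplit (fun m => t x m • α (π m)) k hkl]
      abel
  have hsum : ∀ (x : V) (k : ℕ), k ≤ l →
      z x k = x - ∑ m : Fin l, if k ≤ (m : ℕ) then t x m • α (π m) else 0 :=
    fun x k hk => hsumAux (l - k) x k (by omega)
  have hxc : ∀ x : V, x - c x = ∑ m : Fin l, t x m • α (π m) := by
    intro x
    rw [hcz, hsum x 0 (by omega)]
    rw [Finset.sum_congr rfl (fun m _ => if_pos (Nat.zero_le _))]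
    abel
  -- reindexing sums along π and extracting coefficients
  have hreindex : ∀ (f : Fin l → ℝ),
      ∑ m : Fin l, f m • α (π m) = ∑ j : Fin l, f (π.symm j) • α j := by
    intro f
    rw [← Equiv.sum_comp π (fun j => f (π.symm j) • α j)]
    simp
  have hcoeff : ∀ (f g : Fin l → ℝ), (∑ j : Fin l, f j • α j) = (∑ j : Fin l, g j • α j) →
      ∀ j, f j = g j := by
    intro f g h j
    have h0 : ∑ j : Fin l, (f j - g j) • α j = 0 := by
      simp [sub_smul, Finset.sum_sub_distrib, h]
    have := Fintype.linearIndependent_iff.mp hind (fun j => f j - g j) h0 j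
    linarith
  -- linearity of the reflections and the Coxeter element
  have hslin : ∀ i, IsLinearMap ℝ (s i) := by
    intro i
    constructor
    · intro x y
      simp only [hs, inner_add_left]
      rw [show (2 * (⟪x, α i⟫ + ⟪y, α i⟫) / ⟪α i, α i⟫ : ℝ)
          = 2 * ⟪x, α i⟫ / ⟪α i, α i⟫ + 2 * ⟪y, α i⟫ / ⟪α i, α i⟫ by ring, add_smul]
      abel
    · intro r x
      simp only [hs, real_inner_smul_left, smul_sub, smul_smul]
      congr 2
      ring
  have hclin : IsLinearMap ℝ c := by
    have key : ∀ M : List (V → V), (∀ f ∈ M, IsLinearMap ℝ f) →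
        IsLinearMap ℝ (M.foldr (· ∘ ·) id) := by
      intro M
      induction M with
      | nil => exact fun _ => ⟨fun _ _ => rfl, fun _ _ => rfl⟩
      | cons f M ih =>
        intro h
        have hf := h f List.mem_cons_self
        have hM := ih fun g hg => h g (List.mem_cons_of_mem _ hg)
        refine ⟨fun x y => ?_, fun r x => ?_⟩
        · simp only [List.foldr_cons, Function.comp_apply, hM.map_add, hf.map_add]
        · simp only [List.foldr_cons, Function.comp_apply, hM.map_smul, hf.map_smul]
    rw [hc]
    refine key L fun f hf => ?_
    rw [hL] at hf
    have hi := List.mem_ofFn.mp hf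
    obtain ⟨i, rfl⟩ := hi
    exact hslin _
  have hAlin : IsLinearMap ℝ (fun x : V => x - c x) :=
    ⟨fun x y => by rw [hclin.map_add]; abel,
     fun r x => by rw [hclin.map_smul, smul_sub]⟩
  have B : Module.Basis (Fin l) ℝ V := Module.Basis.mk hind hspan.ge
  have hfd : FiniteDimensional ℝ V := Module.Finite.of_basis B
  -- kernel is trivial
  have hker : ∀ x : V, x - c x = 0 → x = 0 := by
    intro x hx
    have ht0 : ∀ m, t x m = 0 := by
      intro m
      have h1 : ∑ j : Fin l, t x (π.symm j) • α j = ∑ j : Fin l, (0 : ℝ) • α j := by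
        rw [← hreindex, ← hxc, hx]
        simp
      have := hcoeff _ _ h1 (π m)
      simpa using this
    have hzx : ∀ k : ℕ, k ≤ l → z x k = x := by
      intro k hk
      rw [hsum x k hk]
      simp [ht0]
    have hinner : ∀ j, ⟪x, α j⟫ = 0 := by
      intro j
      have hm := ht0 (π.symm j)
      simp only [htdef] at hm
      have h2 : z x ((π.symm j : ℕ) + 1) = x := hzx _ (by omega)
      rw [h2, Equiv.apply_symm_apply] at hm
      rw [div_eq_zero_iff] at hm
      rcases hm with hm | hm
      · linarith
      · exact absurd hm (hnn j)
    have hx2 : ⟪x, x⟫ = 0 := by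
      have hxmem : x ∈ Submodule.span ℝ (Set.range α) := by rw [hspan]; trivial
      refine Submodule.span_induction (p := fun u _ => ⟪x, u⟫ = 0) ?_ ?_ ?_ ?_ hxmem
      · rintro u ⟨j, rfl⟩
        exact hinner j
      · exact inner_zero_right x
      · intro u v _ _ hu hv
        rw [inner_add_right, hu, hv, add_zero]
      · intro r u _ hu
        rw [real_inner_smul_right, hu, mul_zero]
    exact (inner_self_eq_zero (𝕜 := ℝ)).mp hx2
  -- part 2
  have part2 : ∀ i j : Fin l, ∀ x : V, x - c x = α i →
      ⟪x + c x, α j⟫ = ε i j * ⟪α i, α j⟫ := by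
    intro i j x hx
    have hεd : ε i j = if i = j then 0 else
        if π.symm i < π.symm j then (-1 : ℝ) else 1 := rfl
    set m0 := π.symm i with hm0
    have hπm0 : π m0 = i := Equiv.apply_symm_apply π i
    have htval : ∀ m, t x m = if m = m0 then 1 else 0 := by
      intro m
      have h1 : ∑ j' : Fin l, t x (π.symm j') • α j'
          = ∑ j' : Fin l, (if j' = i then (1 : ℝ) else 0) • α j' := by
        rw [← hreindex, ← hxc, hx]
        simp [ite_smul]
      have h2 := hcoeff _ _ h1 (π m)
      rw [Equiv.symm_apply_apply] at h2
      rw [h2]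
      by_cases hm : m = m0
      · rw [if_pos hm, if_pos (by rw [hm, hπm0])]
      · rw [if_neg hm, if_neg (fun h => hm (by rw [hm0, ← h, Equiv.symm_apply_apply]))]
    have hzk : ∀ k : ℕ, k ≤ l → z x k = x - (if k ≤ (m0 : ℕ) then α i else 0) := by
      intro k hk
      rw [hsum x k hk]
      congr 1
      rw [Finset.sum_eq_single m0]
      · rw [htval m0, if_pos rfl, one_smul, hπm0]
      · intro m _ hm
        rw [htval m, if_neg hm, zero_smul]
        simp
      · intro h
        exact absurd (Finset.mem_univ _) h
    have hti : 2 * ⟪x, α i⟫ = ⟪α i, α i⟫ := by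
      have h1 := htval m0
      rw [if_pos rfl] at h1
      simp only [htdef] at h1
      have hz1 : z x ((m0 : ℕ) + 1) = x := by
        rw [hzk ((m0 : ℕ) + 1) (by omega), if_neg (by omega)]
        simp
      rw [hz1, hπm0, div_eq_one_iff_eq (hnn i)] at h1
      exact h1
    have hcx : c x = x - α i := by rw [← hx]; abel
    have hgoal : ⟪x + c x, α j⟫ = 2 * ⟪x, α j⟫ - ⟪α i, α j⟫ := by
      rw [hcx, show x + (x - α i) = x + x - α i by abel, inner_sub_left, inner_add_left]
      ring
    rw [hgoal, hεd]
    by_cases hij : i = j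
    · subst hij
      rw [if_pos rfl]
      linarith [hti]
    · rw [if_neg hij]
      set n0 := π.symm j with hn0
      have hπn0 : π n0 = j := Equiv.apply_symm_apply π j
      have hmn : n0 ≠ m0 := fun h => hij (by rw [← hπm0, ← hπn0, h])
      have htn : t x n0 = 0 := by rw [htval n0, if_neg hmn]
      have hzn : ⟪z x ((n0 : ℕ) + 1), α j⟫ = 0 := by
        simp only [htdef] at htn
        rw [hπn0, div_eq_zero_iff] at htn
        rcases htn with h | h
        · linarith
        · exact absurd h (hnn j)
      rcases (lt_or_gt_of_ne hmn).symm with h | h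
      · -- m0 < n0 : the ε is -1
        have hlt : (m0 : ℕ) < (n0 : ℕ) := h
        have hz1 : z x ((n0 : ℕ) + 1) = x := by
          rw [hzk ((n0 : ℕ) + 1) (by omega), if_neg (by omega)]
          simp
        rw [hz1] at hzn
        rw [if_pos h]
        rw [hzn]
        ring
      · -- n0 < m0 : the ε is +1
        have hlt : (n0 : ℕ) < (m0 : ℕ) := h
        have hz1 : z x ((n0 : ℕ) + 1) = x - α i := by
          rw [hzk ((n0 : ℕ) + 1) (by omega), if_pos (by omega)]
        rw [hz1, inner_sub_left] at hzn
        rw [if_neg (not_lt.mpr h.le)]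
        linarith
  refine ⟨?_, part2⟩
  let A : V →ₗ[ℝ] V := IsLinearMap.mk' _ hAlin
  have hkerA : LinearMap.ker A = ⊥ := by
    rw [LinearMap.ker_eq_bot']
    intro x hx
    exact hker x hx
  have hinjA : Function.Injective A := LinearMap.ker_eq_bot.mp hkerA
  have hsurjA : Function.Surjective A := LinearMap.injective_iff_surjective.mp hinjA
  exact ⟨hinjA, hsurjA⟩
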